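/- arXiv:2310.00102 — 7 statements merged into one kernel-verified Lean document; each statement's English description precedes it below -/
import Mathlib

section
/- Let X be a finite set of n distinct K-rational points of P^{k-1} and let a ≥ 1 be an integer. Then the minimum distance of the evaluation code of order a satisfies d(X)_a = n − max{ |X'| : X' ⊊ X and dim_K I(X')_a > dim_K I(X)_a }, where the maximum is over proper subsets X' of X (the set over which the maximum is taken is nonempty, as it contains the empty set when I(X)_a ≠ R_a). -/
open MvPolynomial

/-- The representative vectors define pairwise distinct points of projective space. -/
def ProjectivelyDistinct {K : Type*} [Field K] {n k : ℕ} (v : Fin n → Fin k → K) : Prop :=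
  ∀ i j : Fin n, i ≠ j → ∀ c : K, v i ≠ c • v j

/-- The points are in general linear position: any at most `k` of them are linearly
independent. -/
def GeneralLinearPosition (K : Type*) [Field K] {n k : ℕ} (v : Fin n → Fin k → K) : Prop :=
  ∀ S : Finset (Fin n), S.card ≤ k → LinearIndependent K (fun i : S => v (i : Fin n))

/-- Minimum distance of the evaluation code of order `a`. -/
noncomputable def minDist {K : Type*} [Field K] {n k : ℕ} (a : ℕ) (v : Fin n → Fin k → K) : ℕ :=
  sInf { m | ∃ f : MvPolynomial (Fin k) K, f.IsHomogeneous a ∧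
      (∃ i, eval (v i) f ≠ 0) ∧ m = Set.ncard {i | eval (v i) f ≠ 0} }

/-- Initial degree of the vanishing ideal of the subfamily of points indexed by `S`. -/
noncomputable def initDegOn {K : Type*} [Field K] {n k : ℕ}
    (v : Fin n → Fin k → K) (S : Set (Fin n)) : ℕ :=
  sInf { d | ∃ f : MvPolynomial (Fin k) K, f ≠ 0 ∧ f.IsHomogeneous d ∧ ∀ i ∈ S, eval (v i) f = 0 }

/-- Degree-`a` part of the vanishing ideal of the points indexed by `S`, as a subspace. -/
noncomputable def homVan {K : Type*} [Field K] {n k : ℕ} (a : ℕ)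
    (v : Fin n → Fin k → K) (S : Set (Fin n)) : Submodule K (MvPolynomial (Fin k) K) :=
  homogeneousSubmodule (Fin k) K a ⊓
    ⨅ i ∈ S, LinearMap.ker ((aeval (v i) : MvPolynomial (Fin k) K →ₐ[K] K).toLinearMap)

/-- Hilbert function of `R/I(X)` where `X` is the set of points indexed by `S`. -/
noncomputable def HFpts {K : Type*} [Field K] {n k : ℕ}
    (v : Fin n → Fin k → K) (S : Set (Fin n)) (i : ℕ) : ℕ :=
  Module.finrank K (homogeneousSubmodule (Fin k) K i) - Module.finrank K (homVan i v S)

/-- Maximum number of the points lying on a common hyperplane. -/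
noncomputable def hypNum {K : Type*} [Field K] {n k : ℕ} (v : Fin n → Fin k → K) : ℕ :=
  sSup { m | ∃ L : MvPolynomial (Fin k) K, L ≠ 0 ∧ L.IsHomogeneous 1 ∧
      m = Set.ncard {i | eval (v i) L = 0} }

/-- The homogeneous vanishing ideal of the points indexed by `S`. -/
noncomputable def projIdeal {K : Type*} [Field K] {n k : ℕ}
    (v : Fin n → Fin k → K) (S : Set (Fin n)) : Ideal (MvPolynomial (Fin k) K) :=
  Ideal.span { f | (∃ d, f.IsHomogeneous d) ∧ ∀ i ∈ S, eval (v i) f = 0 }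

/-- The minimum socle degree of the Artinian reduction by the linear form `L` of the
coordinate ring of the points indexed by `S`. -/
noncomputable def socleDeg {K : Type*} [Field K] {n k : ℕ}
    (v : Fin n → Fin k → K) (S : Set (Fin n)) (L : MvPolynomial (Fin k) K) : ℕ :=
  sInf { d | ∃ g : MvPolynomial (Fin k) K, g.IsHomogeneous d ∧
      g ∉ projIdeal v S ⊔ Ideal.span {L} ∧
      ∀ j : Fin k, MvPolynomial.X j * g ∈ projIdeal v S ⊔ Ideal.span {L} }
-- auxiliary lemmas
lemma my_aeval_eq_eval {K : Type*} [Field K] {k : ℕ} (x : Fin k → K) (f : MvPolynomial (Fin k) K) :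
    aeval x f = eval x f := by
  rw [aeval_def, Algebra.algebraMap_self, eval₂_id]

lemma my_fd_hom {K : Type*} [Field K] {k : ℕ} (a : ℕ) :
    FiniteDimensional K (homogeneousSubmodule (Fin k) K a) := by
  apply Submodule.finiteDimensional_of_le (S₂ := restrictTotalDegree (Fin k) K a)
  intro f hf
  exact (mem_restrictTotalDegree _ _ _).2 ((mem_homogeneousSubmodule _ _).1 hf).totalDegree_le

lemma my_mem_homVan {K : Type*} [Field K] {n k : ℕ} (a : ℕ) (v : Fin n → Fin k → K)
    (S : Set (Fin n)) (f : MvPolynomial (Fin k) K) :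
    f ∈ homVan a v S ↔ f.IsHomogeneous a ∧ ∀ i ∈ S, eval (v i) f = 0 := by
  simp only [homVan, Submodule.mem_inf, Submodule.mem_iInf, mem_homogeneousSubmodule,
    LinearMap.mem_ker, AlgHom.toLinearMap_apply, my_aeval_eq_eval]


/-- Proposition 2.2, minimum distance: `d(X)_a` equals `n` minus the
maximum size of a proper subset `X' ⊊ X` with `dim I(X')_a > dim I(X)_a`. -/
theorem mindist_eq_card_sub_max_subset {K : Type*} [Field K] {n k : ℕ}
    (hk : 2 ≤ k)
    (v : Fin n → Fin k → K) (hv0 : ∀ i, v i ≠ 0) (hdist : ProjectivelyDistinct v)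
    (a : ℕ) (ha : 1 ≤ a) :
    minDist a v = n - sSup { m | ∃ S : Set (Fin n), S ≠ Set.univ ∧
        Module.finrank K (homVan a v Set.univ) < Module.finrank K (homVan a v S) ∧
        m = S.ncard } := by


  classical
  haveI : FiniteDimensional K (homogeneousSubmodule (Fin k) K a) := my_fd_hom a
  haveI hFD : ∀ S : Set (Fin n), FiniteDimensional K (homVan a v S) := fun S =>
    Submodule.finiteDimensional_of_le inf_le_left
  set A := { m | ∃ f : MvPolynomial (Fin k) K, f.IsHomogeneous a ∧
      (∃ i, eval (v i) f ≠ 0) ∧ m = Set.ncard {i | eval (v i) f ≠ 0} } with hA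
  set B := { m | ∃ S : Set (Fin n), S ≠ Set.univ ∧
      Module.finrank K (homVan a v Set.univ) < Module.finrank K (homVan a v S) ∧
      m = S.ncard } with hB
  rcases Nat.eq_zero_or_pos n with hn | hn
  · subst hn
    have hAe : A = ∅ := by
      ext m
      simp only [hA, Set.mem_setOf_eq, Set.mem_empty_iff_false, iff_false, not_exists]
      rintro f ⟨_, ⟨i, _⟩, _⟩
      exact i.elim0
    have hBe : B = ∅ := by
      ext m
      simp only [hB, Set.mem_setOf_eq, Set.mem_empty_iff_false, iff_false, not_exists]
      rintro S ⟨hS, _⟩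
      exact hS (Set.eq_univ_of_forall fun i => i.elim0)
    rw [minDist, ← hA, hAe, hBe, Nat.sInf_empty]
    simp
  -- the key transfer lemmas
  have trans1 : ∀ w ∈ A, ∃ m ∈ B, m + w = n := by
    rintro w ⟨f, hhom, ⟨i0, hi0⟩, rfl⟩
    refine ⟨Set.ncard {i | eval (v i) f = 0}, ⟨{i | eval (v i) f = 0}, ?_, ?_, rfl⟩, ?_⟩
    · intro h
      exact hi0 (h.ge (Set.mem_univ i0))
    · have hle : homVan a v Set.univ ≤ homVan a v {i | eval (v i) f = 0} := by
        intro g hg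
        rw [my_mem_homVan] at hg ⊢
        exact ⟨hg.1, fun i _ => hg.2 i (Set.mem_univ i)⟩
      have hfS : f ∈ homVan a v {i | eval (v i) f = 0} :=
        (my_mem_homVan a v _ f).2 ⟨hhom, fun i hi => hi⟩
      have hfU : f ∉ homVan a v Set.univ := fun h =>
        hi0 (((my_mem_homVan a v _ f).1 h).2 i0 (Set.mem_univ i0))
      exact Submodule.finrank_lt_finrank_of_lt (hle.lt_of_ne (fun h => hfU (h ▸ hfS)))
    · have := Set.ncard_add_ncard_compl {i | eval (v i) f = 0}
      rw [Nat.card_eq_fintype_card, Fintype.card_fin] at this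
      have hc : {i | eval (v i) f = 0}ᶜ = {i | eval (v i) f ≠ 0} := by
        ext i; simp
      rw [hc] at this
      exact this
  have trans2 : ∀ m ∈ B, ∃ w ∈ A, w + m ≤ n := by
    rintro m ⟨S, hSne, hrank, rfl⟩
    have hle : homVan a v Set.univ ≤ homVan a v S := by
      intro g hg
      rw [my_mem_homVan] at hg ⊢
      exact ⟨hg.1, fun i _ => hg.2 i (Set.mem_univ i)⟩
    obtain ⟨f, hfS, hfU⟩ := SetLike.exists_of_lt
      (hle.lt_of_ne (fun h => absurd hrank (h ▸ lt_irrefl _)))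
    rw [my_mem_homVan] at hfS
    have hex : ∃ i, eval (v i) f ≠ 0 := by
      by_contra h
      push_neg at h
      exact hfU ((my_mem_homVan a v _ f).2 ⟨hfS.1, fun i _ => h i⟩)
    refine ⟨Set.ncard {i | eval (v i) f ≠ 0}, ⟨f, hfS.1, hex, rfl⟩, ?_⟩
    have hsub : S ⊆ {i | eval (v i) f ≠ 0}ᶜ := by
      intro i hi
      simp only [Set.mem_compl_iff, Set.mem_setOf_eq, not_not]
      exact hfS.2 i hi
    have h1 : S.ncard ≤ ({i | eval (v i) f ≠ 0}ᶜ).ncard :=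
      Set.ncard_le_ncard hsub (Set.toFinite _)
    have h2 := Set.ncard_add_ncard_compl {i | eval (v i) f ≠ 0}
    rw [Nat.card_eq_fintype_card, Fintype.card_fin] at h2
    omega
  -- nonemptiness of A
  have hAne : A.Nonempty := by
    obtain ⟨j, hj⟩ : ∃ j, v ⟨0, hn⟩ j ≠ 0 := by
      by_contra h
      push_neg at h
      exact hv0 ⟨0, hn⟩ (funext h)
    refine ⟨_, ⟨X j ^ a, ?_, ⟨⟨0, hn⟩, ?_⟩, rfl⟩⟩
    · simpa using (isHomogeneous_X K j).pow a
    · simp only [map_pow, eval_X]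
      exact pow_ne_zero a hj
  have hBne : B.Nonempty := by
    obtain ⟨w, hw⟩ := hAne
    obtain ⟨m, hm, _⟩ := trans1 w hw
    exact ⟨m, hm⟩
  have hBdd : BddAbove B := by
    refine ⟨n, fun m hm => ?_⟩
    obtain ⟨w, _, h⟩ := trans2 m hm
    omega
  have hSupB : sSup B ∈ B := Nat.sSup_mem hBne hBdd
  apply le_antisymm
  · obtain ⟨w, hw, hwle⟩ := trans2 (sSup B) hSupB
    exact le_trans (Nat.sInf_le hw) (by omega)
  · apply le_csInf hAne
    intro w hw
    obtain ⟨m, hm, hmw⟩ := trans1 w hw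
    have : m ≤ sSup B := le_csSup hBdd hm
    omega
end

section
/- Let X be a set of n distinct K-rational points of P^{k-1} with k ≥ 3, not all contained in a hyperplane (so α(X) ≥ 2), and let a be an integer with 1 ≤ a ≤ α(X) − 1. Then there exists u ∈ {0, 1, …, k−2} such that d(X)_a + u ≥ (k−1)(α(X) − a). -/
open MvPolynomial

/-- Any at most `k-1` of the vectors lie on a hyperplane: there is a nonzero linear
form vanishing on all of them. -/
lemma exists_linear_form_aux {K : Type*} [Field K] {n k : ℕ}
    (v : Fin n → Fin k → K) (s : Finset (Fin n)) (hs : s.card < k) :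
    ∃ ℓ : MvPolynomial (Fin k) K, ℓ ≠ 0 ∧ ℓ.IsHomogeneous 1 ∧ ∀ i ∈ s, eval (v i) ℓ = 0 := by
  classical
  -- the linear map sending coefficients `c` to the evaluations `∑ j, c j * v i j`
  let φ : (Fin k → K) →ₗ[K] (s → K) :=
    LinearMap.pi fun i : s => ∑ j : Fin k, (v (i : Fin n) j) • LinearMap.proj j
  have hker : LinearMap.ker φ ≠ ⊥ := by
    apply LinearMap.ker_ne_bot_of_finrank_lt
    simpa using lt_of_le_of_lt (le_of_eq (by simp)) hs
  obtain ⟨c, hc, hc0⟩ := Submodule.exists_mem_ne_zero_of_ne_bot hker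
  have hcv : ∀ i ∈ s, ∑ j : Fin k, c j * v i j = 0 := by
    intro i hi
    have := congrFun (LinearMap.mem_ker.mp hc) ⟨i, hi⟩
    simpa [φ, mul_comm] using this
  refine ⟨∑ j : Fin k, C (c j) * X j, ?_, ?_, ?_⟩
  · -- nonzero: evaluate at a suitable basis vector
    obtain ⟨j₀, hj₀⟩ : ∃ j₀, c j₀ ≠ 0 := by
      by_contra h; push_neg at h; exact hc0 (funext h)
    intro h0
    have := congrArg (eval (Pi.single j₀ (1:K))) h0
    simp only [map_sum, map_mul, eval_C, eval_X, map_zero] at this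
    rw [Finset.sum_eq_single j₀ (by intro b _ hb; simp [Pi.single_apply, hb])
      (by simp)] at this
    simp [Pi.single_apply] at this
    exact hj₀ this
  · exact IsHomogeneous.sum _ _ _ fun j _ => (isHomogeneous_X _ _).C_mul _
  · intro i hi
    simp only [map_sum, map_mul, eval_C, eval_X]
    exact hcv i hi

/-- Any set of at most `m*(k-1)` of the points can be covered by a nonzero product of `m`
linear forms. -/
lemma exists_cover_aux {K : Type*} [Field K] {n k : ℕ} (hk : 2 ≤ k)
    (v : Fin n → Fin k → K) :
    ∀ m : ℕ, ∀ T : Finset (Fin n), T.card ≤ m * (k - 1) →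
      ∃ g : MvPolynomial (Fin k) K, g ≠ 0 ∧ g.IsHomogeneous m ∧ ∀ i ∈ T, eval (v i) g = 0 := by
  classical
  intro m
  induction m with
  | zero =>
    intro T hT
    have : T = ∅ := Finset.card_eq_zero.mp (by omega)
    exact ⟨1, one_ne_zero, isHomogeneous_one _ _, by simp [this]⟩
  | succ m ih =>
    intro T hT
    obtain ⟨T₀, hT₀sub, hT₀card⟩ := Finset.exists_subset_card_eq (s := T) (n := min T.card (k - 1))
      (min_le_left _ _)
    obtain ⟨ℓ, hℓ0, hℓh, hℓv⟩ := exists_linear_form_aux v T₀ (by omega)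
    obtain ⟨g, hg0, hgh, hgv⟩ := ih (T \ T₀) (by
      rw [Finset.card_sdiff_of_subset hT₀sub, hT₀card]
      have hmul : (m + 1) * (k - 1) = m * (k - 1) + (k - 1) := by ring
      omega)
    refine ⟨ℓ * g, mul_ne_zero hℓ0 hg0, by simpa [Nat.add_comm] using hℓh.mul hgh, ?_⟩
    intro i hi
    rw [map_mul]
    by_cases h : i ∈ T₀
    · rw [hℓv i h, zero_mul]
    · rw [hgv i (Finset.mem_sdiff.mpr ⟨hi, h⟩), mul_zero]

/-- Proposition 3.2: there is `u ∈ {0,…,k-2}` with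
`d(X)_a + u ≥ (k-1)(α(X) - a)`. -/
theorem mindist_add_u_ge {K : Type*} [Field K] {n k : ℕ}
    (hk : 3 ≤ k)
    (v : Fin n → Fin k → K) (hv0 : ∀ i, v i ≠ 0) (hdist : ProjectivelyDistinct v)
    (hspan : Submodule.span K (Set.range v) = ⊤)
    (a : ℕ) (ha1 : 1 ≤ a) (ha2 : a ≤ initDegOn v Set.univ - 1) :
    ∃ u : ℕ, u ≤ k - 2 ∧ (k - 1) * (initDegOn v Set.univ - a) ≤ minDist a v + u := by
  classical
  -- there is at least one point
  have hn : 0 < n := by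
    rcases Nat.eq_zero_or_pos n with h | h
    · exfalso
      subst h
      have hr : Set.range v = ∅ := by
        simp [Set.range_eq_empty]
      rw [hr, Submodule.span_empty] at hspan
      have : (Pi.single (⟨0, by omega⟩ : Fin k) (1 : K) : Fin k → K) ∈
          (⊥ : Submodule K (Fin k → K)) := hspan ▸ Submodule.mem_top
      simp only [Submodule.mem_bot] at this
      have := congrFun this ⟨0, by omega⟩
      simp at this
    · exact h
  -- the minimum distance set is nonempty
  set i₀ : Fin n := ⟨0, hn⟩
  obtain ⟨j₀, hj₀⟩ : ∃ j₀, v i₀ j₀ ≠ 0 := by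
    by_contra h; push_neg at h; exact hv0 i₀ (funext h)
  have hne : { m | ∃ f : MvPolynomial (Fin k) K, f.IsHomogeneous a ∧
      (∃ i, eval (v i) f ≠ 0) ∧ m = Set.ncard {i | eval (v i) f ≠ 0} }.Nonempty := by
    refine ⟨_, X j₀ ^ a, by simpa using (isHomogeneous_X K j₀).pow a, ⟨i₀, ?_⟩, rfl⟩
    simp only [map_pow, eval_X]
    exact pow_ne_zero _ hj₀
  obtain ⟨f, hfh, ⟨i₁, hi₁⟩, hdcard⟩ := Nat.sInf_mem hne
  set d := minDist a v with hd
  -- the support of `f` as a finset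
  set T : Finset (Fin n) := {i | eval (v i) f ≠ 0}.toFinset with hT
  have hdT : d = T.card := by
    rw [hd]; unfold minDist; rw [hdcard, hT, Set.ncard_eq_toFinset_card']
  -- cover the support by ⌈d/(k-1)⌉ hyperplanes
  set m : ℕ := (d + (k - 2)) / (k - 1) with hm
  have hk1 : 0 < k - 1 := by omega
  have hdm2 : m * (k - 1) ≤ d + (k - 2) := by
    rw [hm]; exact Nat.div_mul_le_self _ _
  have hdm1 : d ≤ m * (k - 1) := by
    have h1 : (k - 1) * m + (d + (k - 2)) % (k - 1) = d + (k - 2) := by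
      rw [hm]; exact Nat.div_add_mod _ _
    have h2 : (d + (k - 2)) % (k - 1) < k - 1 := Nat.mod_lt _ hk1
    rw [Nat.mul_comm m (k - 1)]
    omega
  obtain ⟨g, hg0, hgh, hgv⟩ := exists_cover_aux (by omega) v m T (hdT ▸ hdm1)
  -- the product vanishes on all points
  have hf0 : f ≠ 0 := fun h => hi₁ (by simp [h])
  have hG : initDegOn v Set.univ ≤ a + m := by
    apply Nat.sInf_le
    refine ⟨f * g, mul_ne_zero hf0 hg0, hfh.mul hgh, ?_⟩
    intro i _
    rw [map_mul]
    by_cases h : eval (v i) f = 0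
    · rw [h, zero_mul]
    · rw [hgv i (by simp [hT, h]), mul_zero]
  refine ⟨k - 2, le_refl _, ?_⟩
  have h1 : initDegOn v Set.univ - a ≤ m := by omega
  calc (k - 1) * (initDegOn v Set.univ - a) ≤ (k - 1) * m :=
        Nat.mul_le_mul_left _ h1
    _ ≤ d + (k - 2) := by rw [Nat.mul_comm]; exact hdm2
end

section
/- Let X be a set of n distinct K-rational points of P^{k-1} with k ≥ 3, not all contained in a hyperplane, and let a ≥ 1 be an integer. Then, as integers, d(X)_a ≥ (k−1)(α(X) − 1 − a) + 1. -/
open MvPolynomial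

lemma exists_linear_vanish {K : Type*} [Field K] {n k : ℕ} (hk : 3 ≤ k)
    (v : Fin n → Fin k → K) (S : Finset (Fin n)) (hS : S.card ≤ k - 1) :
    ∃ L : MvPolynomial (Fin k) K, L ≠ 0 ∧ L.IsHomogeneous 1 ∧ ∀ i ∈ S, eval (v i) L = 0 := by
  have hΦ : ∃ c : Fin k → K, c ≠ 0 ∧ ∀ i ∈ S, ∑ j, c j * v i j = 0 := by
    set Φ : (Fin k → K) →ₗ[K] (S → K) :=
      { toFun := fun c i => ∑ j, c j * v i j
        map_add' := by intro x y; funext i; simp [add_mul, Finset.sum_add_distrib]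
        map_smul' := by intro r x; funext i; simp [Finset.mul_sum, mul_assoc] }
    have hninj : ¬ Function.Injective Φ := by
      intro hinj
      have h1 := LinearMap.finrank_le_finrank_of_injective hinj
      simp [Module.finrank_pi] at h1
      omega
    obtain ⟨x, y, hxy, hne⟩ := Function.not_injective_iff.mp hninj
    refine ⟨x - y, sub_ne_zero.mpr hne, fun i hi => ?_⟩
    have : Φ (x - y) = 0 := by rw [map_sub, hxy, sub_self]
    have := congrFun this ⟨i, hi⟩
    simpa [Φ, sub_mul, Finset.sum_sub_distrib] using this
  obtain ⟨c, hc, hcv⟩ := hΦ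
  refine ⟨∑ j, C (c j) * X j, ?_, ?_, ?_⟩
  · obtain ⟨j, hj⟩ := Function.ne_iff.mp hc
    intro h
    have := congrArg (eval (Pi.single j 1 : Fin k → K)) h
    simp [Pi.single_apply, Finset.sum_ite_eq'] at this
    exact hj this
  · apply IsHomogeneous.sum
    intro j _
    simpa using (isHomogeneous_C (Fin k) (c j)).mul (isHomogeneous_X K j)
  · intro i hi
    simpa using hcv i hi

lemma vanish_on_finset {K : Type*} [Field K] {n k : ℕ} (hk : 3 ≤ k)
    (v : Fin n → Fin k → K) :
    ∀ c : ℕ, ∀ T : Finset (Fin n), T.card ≤ c * (k - 1) →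
      ∃ g : MvPolynomial (Fin k) K, g ≠ 0 ∧ g.IsHomogeneous c ∧ ∀ i ∈ T, eval (v i) g = 0 := by
  intro c
  induction c with
  | zero =>
    intro T hT
    simp only [Nat.zero_mul, Nat.le_zero, Finset.card_eq_zero] at hT
    exact ⟨1, one_ne_zero, isHomogeneous_one _ _, by simp [hT]⟩
  | succ c ih =>
    intro T hT
    obtain ⟨S, hST, hScard⟩ := Finset.exists_subset_card_eq (min_le_left T.card (k - 1))
    obtain ⟨L, hL0, hL1, hLv⟩ := exists_linear_vanish hk v S (by omega)
    have hcard : (T \ S).card ≤ c * (k - 1) := by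
      rw [Finset.card_sdiff_of_subset hST]
      have hsucc : (c + 1) * (k - 1) = c * (k - 1) + (k - 1) := by ring
      omega
    obtain ⟨g, hg0, hgh, hgv⟩ := ih (T \ S) hcard
    refine ⟨g * L, mul_ne_zero hg0 hL0, hgh.mul hL1, fun i hi => ?_⟩
    rw [map_mul]
    by_cases h : i ∈ S
    · rw [hLv i h, mul_zero]
    · rw [hgv i (Finset.mem_sdiff.mpr ⟨hi, h⟩), zero_mul]

/-- Corollary 3.3: `d(X)_a ≥ (k-1)(α(X) - 1 - a) + 1` as integers. -/
theorem mindist_ge_linear_alpha_bound {K : Type*} [Field K] {n k : ℕ}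
    (hk : 3 ≤ k)
    (v : Fin n → Fin k → K) (hv0 : ∀ i, v i ≠ 0) (hdist : ProjectivelyDistinct v)
    (hspan : Submodule.span K (Set.range v) = ⊤)
    (a : ℕ) (ha : 1 ≤ a) :
    ((k : ℤ) - 1) * ((initDegOn v Set.univ : ℤ) - 1 - (a : ℤ)) + 1 ≤ (minDist a v : ℤ) := by
  classical
  -- Fin n is nonempty
  have hkp : 0 < k := by omega
  have hn : Nonempty (Fin n) := by
    by_contra h
    have hr : Set.range v = ∅ := by
      rw [Set.range_eq_empty_iff]
      exact not_nonempty_iff.mp h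
    rw [hr, Submodule.span_empty] at hspan
    have : (Pi.single (⟨0, hkp⟩ : Fin k) 1 : Fin k → K) ∈ (⊥ : Submodule K (Fin k → K)) :=
      hspan ▸ Submodule.mem_top
    rw [Submodule.mem_bot] at this
    have := congrFun this ⟨0, hkp⟩
    simp at this
  obtain ⟨i0⟩ := hn
  obtain ⟨j0, hj0⟩ := Function.ne_iff.mp (hv0 i0)
  -- the minDist set is nonempty
  have hfh : (X j0 ^ a : MvPolynomial (Fin k) K).IsHomogeneous a := by
    simpa using (isHomogeneous_X K j0).pow a
  have hfne : eval (v i0) (X j0 ^ a : MvPolynomial (Fin k) K) ≠ 0 := by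
    simp only [map_pow, eval_X]
    exact pow_ne_zero a hj0
  have hne : { m | ∃ f : MvPolynomial (Fin k) K, f.IsHomogeneous a ∧
      (∃ i, eval (v i) f ≠ 0) ∧ m = Set.ncard {i | eval (v i) f ≠ 0} }.Nonempty :=
    ⟨_, X j0 ^ a, hfh, ⟨i0, hfne⟩, rfl⟩
  obtain ⟨f, hf, ⟨iw, hiw⟩, hd⟩ := Nat.sInf_mem hne
  have hdn : minDist a v = Set.ncard {i | eval (v i) f ≠ 0} := hd
  set d := minDist a v with hdd
  -- the support finset
  set T : Finset (Fin n) := {i | eval (v i) f ≠ 0}.toFinset with hT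
  have hTcard : T.card = d := by
    rw [hdn]
    exact (Set.ncard_eq_toFinset_card' _).symm
  -- ceiling division
  set c : ℕ := (d + (k - 2)) / (k - 1) with hc
  have hdiv := Nat.div_add_mod (d + (k - 2)) (k - 1)
  have hmod := Nat.mod_lt (d + (k - 2)) (show 0 < k - 1 by omega)
  rw [← hc] at hdiv
  have hmul : (k - 1) * c = c * (k - 1) := Nat.mul_comm _ _
  have hdle : d ≤ c * (k - 1) := by omega
  have hcle : c * (k - 1) ≤ d + (k - 2) := by omega
  obtain ⟨g, hg0, hgh, hgv⟩ := vanish_on_finset hk v c T (hTcard ▸ hdle)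
  -- f ≠ 0
  have hf0 : f ≠ 0 := by
    intro h; rw [h] at hiw; simp at hiw
  -- α ≤ a + c
  have hα : initDegOn v Set.univ ≤ a + c := by
    apply Nat.sInf_le
    refine ⟨f * g, mul_ne_zero hf0 hg0, hf.mul hgh, fun i _ => ?_⟩
    rw [map_mul]
    by_cases h : eval (v i) f = 0
    · rw [h, zero_mul]
    · rw [hgv i (by rw [hT, Set.mem_toFinset]; exact h), mul_zero]
  -- conclude
  have h1 : (initDegOn v Set.univ : ℤ) ≤ (a : ℤ) + c := by exact_mod_cast hα
  have h2 : (c : ℤ) * ((k : ℤ) - 1) ≤ (d : ℤ) + (k : ℤ) - 2 := by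
    have : (c * (k - 1) : ℕ) ≤ d + (k - 2) := hcle
    zify [show 1 ≤ k by omega, show 2 ≤ k by omega] at this
    linarith
  have hk3 : (3 : ℤ) ≤ (k : ℤ) := by exact_mod_cast hk
  nlinarith [mul_le_mul_of_nonneg_left (show (initDegOn v Set.univ : ℤ) - 1 - a ≤ (c : ℤ) - 1 by linarith) (show (0:ℤ) ≤ (k:ℤ) - 1 by linarith)]
end

section
/- Let X be a set of n distinct K-rational points of P^{k-1} with n ≥ k ≥ 3, in general linear position, and let L ∈ R_1 be a linear form with L(v_P) ≠ 0 for every P ∈ X. Let s(X) be the minimum socle degree computed with respect to L, and let a be an integer with 1 ≤ a ≤ s(X) − 1. Then either d(X)_a ≤ k − 1 or d(X)_a ≥ (k−1)(s(X) − 1 − a) + 2. -/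
open MvPolynomial

attribute [local instance] MvPolynomial.gradedAlgebra

section Aux

variable {K : Type*} [Field K] {n k : ℕ}

private lemma eval_eq_dual (φ : (Fin k → K) →ₗ[K] K) (w : Fin k → K) :
    eval w (∑ j, (C (φ (Pi.single j 1)) * X j : MvPolynomial (Fin k) K)) = φ w := by
  have hw' : w = ∑ j : Fin k, w j • (Pi.single j 1 : Fin k → K) := by
    ext i
    rw [Finset.sum_apply]
    simp [Pi.single_apply]
  have hw : φ w = ∑ j, w j * φ (Pi.single j 1) := by
    conv_lhs => rw [hw']
    rw [map_sum]
    simp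
  rw [map_sum, hw]
  apply Finset.sum_congr rfl
  intro j _
  rw [map_mul, eval_C, eval_X, mul_comm]

private lemma exists_linear_sep (v : Fin n → Fin k → K)
    (hglp : GeneralLinearPosition K v) (P : Fin n) (T : Finset (Fin n))
    (hPT : P ∉ T) (hT : T.card + 1 ≤ k) :
    ∃ ℓ : MvPolynomial (Fin k) K, ℓ.IsHomogeneous 1 ∧ eval (v P) ℓ ≠ 0 ∧
      ∀ i ∈ T, eval (v i) ℓ = 0 := by
  classical
  set S : Finset (Fin n) := insert P T with hS
  have hScard : S.card ≤ k := by
    rw [hS, Finset.card_insert_of_notMem hPT]; omega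
  have hli := hglp S hScard
  have hsp : v P ∉ Submodule.span K (v '' (T : Set (Fin n))) := by
    have hx : (⟨P, Finset.mem_insert_self P T⟩ : S) ∉ {y : S | (y : Fin n) ∈ T} := by
      simpa using hPT
    have h1 := LinearIndependent.notMem_span_image hli hx
    have himg : (fun i : S => v (i : Fin n)) '' {y : S | (y : Fin n) ∈ T}
        = v '' (T : Set (Fin n)) := by
      ext z
      constructor
      · rintro ⟨y, hy, rfl⟩
        exact ⟨y, hy, rfl⟩
      · rintro ⟨i, hi, rfl⟩
        exact ⟨⟨i, Finset.mem_insert_of_mem hi⟩, hi, rfl⟩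
    rwa [himg] at h1
  obtain ⟨φ, hφP, hφT⟩ := Submodule.exists_dual_map_eq_bot_of_notMem hsp inferInstance
  refine ⟨∑ j, C (φ (Pi.single j 1)) * X j, ?_, ?_, ?_⟩
  · exact IsHomogeneous.sum _ _ _ fun j _ => isHomogeneous_C_mul_X _ _
  · rw [eval_eq_dual]; exact hφP
  · intro i hi
    rw [eval_eq_dual]
    have hmem : φ (v i) ∈ Submodule.map φ (Submodule.span K (v '' (T : Set (Fin n)))) :=
      ⟨v i, Submodule.subset_span ⟨i, hi, rfl⟩, rfl⟩
    rw [hφT] at hmem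
    exact (Submodule.mem_bot K).mp hmem

private lemma exists_separator (hk : 3 ≤ k) (v : Fin n → Fin k → K)
    (hglp : GeneralLinearPosition K v) (P : Fin n) :
    ∀ t b : ℕ, ∀ g : MvPolynomial (Fin k) K, g.IsHomogeneous b → eval (v P) g ≠ 0 →
      Set.ncard {i | i ≠ P ∧ eval (v i) g ≠ 0} ≤ t * (k - 1) →
      ∃ h : MvPolynomial (Fin k) K, h.IsHomogeneous (b + t) ∧ eval (v P) h ≠ 0 ∧
        ∀ i, i ≠ P → eval (v i) h = 0 := by
  intro t
  induction t with
  | zero =>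
    intro b g hg hgP hcard
    refine ⟨g, hg, hgP, ?_⟩
    have h0 : {i | i ≠ P ∧ eval (v i) g ≠ 0} = ∅ :=
      (Set.ncard_eq_zero (Set.toFinite _)).mp (Nat.le_zero.mp (by simpa using hcard))
    intro i hiP
    by_contra hne
    exact Set.eq_empty_iff_forall_notMem.mp h0 i ⟨hiP, hne⟩
  | succ t ih =>
    intro b g hg hgP hcard
    classical
    set Dg : Set (Fin n) := {i | i ≠ P ∧ eval (v i) g ≠ 0} with hDgdef
    have hfin : Dg.Finite := Set.toFinite _
    set Tfin : Finset (Fin n) := hfin.toFinset with hTfin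
    have hTfincard : Dg.ncard = Tfin.card := Set.ncard_eq_toFinset_card Dg hfin
    obtain ⟨T, hTsub, hTcard⟩ :=
      Finset.exists_subset_card_eq (show min Tfin.card (k - 1) ≤ Tfin.card from min_le_left _ _)
    have hPT : P ∉ T := by
      intro hPmem
      have h1 := hTsub hPmem
      rw [Set.Finite.mem_toFinset] at h1
      exact h1.1 rfl
    have hTk : T.card + 1 ≤ k := by
      have := min_le_right Tfin.card (k - 1)
      omega
    obtain ⟨ℓ, hℓhom, hℓP, hℓT⟩ := exists_linear_sep v hglp P T hPT hTk
    have hg' : (ℓ * g).IsHomogeneous (b + 1) := by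
      simpa [add_comm] using hℓhom.mul hg
    have hgP' : eval (v P) (ℓ * g) ≠ 0 := by
      rw [map_mul]; exact mul_ne_zero hℓP hgP
    have hTD : (T : Set (Fin n)) ⊆ Dg := by
      intro x hx
      have h1 := hTsub hx
      rwa [Set.Finite.mem_toFinset] at h1
    have hsub : {i | i ≠ P ∧ eval (v i) (ℓ * g) ≠ 0} ⊆ Dg \ (T : Set (Fin n)) := by
      rintro i ⟨hiP, hie⟩
      rw [map_mul] at hie
      have hgi : eval (v i) g ≠ 0 := fun h => hie (by rw [h, mul_zero])
      have hli : eval (v i) ℓ ≠ 0 := fun h => hie (by rw [h, zero_mul])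
      exact ⟨⟨hiP, hgi⟩, fun hiT => hli (hℓT i hiT)⟩
    have hcard' : Set.ncard {i | i ≠ P ∧ eval (v i) (ℓ * g) ≠ 0} ≤ t * (k - 1) := by
      have h1 : Set.ncard {i | i ≠ P ∧ eval (v i) (ℓ * g) ≠ 0} ≤ (Dg \ (T : Set (Fin n))).ncard :=
        Set.ncard_le_ncard hsub (Set.toFinite _)
      have h2 : (Dg \ (T : Set (Fin n))).ncard = Dg.ncard - T.card := by
        rw [Set.ncard_diff hTD (Set.toFinite _), Set.ncard_coe_finset]
      by_cases hc : Tfin.card ≤ k - 1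
      · have hTT : T = Tfin := Finset.eq_of_subset_of_card_le hTsub (by omega)
        have hempty : Dg \ (T : Set (Fin n)) = ∅ := by
          rw [hTT, hTfin, Set.Finite.coe_toFinset, Set.diff_self]
        rw [hempty, Set.ncard_empty] at h1
        omega
      · have hTcard' : T.card = k - 1 := by
          rw [hTcard]; omega
        have hmul : (t + 1) * (k - 1) = t * (k - 1) + (k - 1) := by ring
        omega
    obtain ⟨h, hh, hhP, hhsep⟩ := ih (b + 1) (ℓ * g) hg' hgP' hcard'
    have heq : b + 1 + t = b + (t + 1) := by omega
    exact ⟨h, heq ▸ hh, hhP, hhsep⟩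

private lemma eval_zero_of_mem_projIdeal {v : Fin n → Fin k → K} {S : Set (Fin n)}
    {u : MvPolynomial (Fin k) K} (hu : u ∈ projIdeal v S) {i : Fin n} (hi : i ∈ S) :
    eval (v i) u = 0 := by
  have hle : projIdeal v S ≤ RingHom.ker (eval (v i) : MvPolynomial (Fin k) K →+* K) := by
    rw [projIdeal, Ideal.span_le]
    rintro f ⟨-, hf⟩
    exact RingHom.mem_ker.mpr (hf i hi)
  exact hle hu

private lemma projIdeal_isHomogeneous (v : Fin n → Fin k → K) (S : Set (Fin n)) :
    Ideal.IsHomogeneous (homogeneousSubmodule (Fin k) K) (projIdeal v S) :=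
  Ideal.homogeneous_span _ _ fun x hx => by
    obtain ⟨⟨d, hd⟩, -⟩ := hx
    exact ⟨d, hd⟩

private lemma homogeneousComponent_mem_projIdeal {v : Fin n → Fin k → K} {S : Set (Fin n)}
    {u : MvPolynomial (Fin k) K} (hu : u ∈ projIdeal v S) (m : ℕ) :
    homogeneousComponent m u ∈ projIdeal v S := by
  have h := projIdeal_isHomogeneous v S m hu
  have heq : ((DirectSum.decompose (homogeneousSubmodule (Fin k) K) u m :
      homogeneousSubmodule (Fin k) K m) : MvPolynomial (Fin k) K) = homogeneousComponent m u :=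
    decomposition.decompose'_apply u m
  rwa [heq] at h

private lemma comp_mul_lin (q L : MvPolynomial (Fin k) K) (hL : L.IsHomogeneous 1) (m : ℕ) :
    homogeneousComponent m (q * L) =
      if m = 0 then 0 else homogeneousComponent (m - 1) q * L := by
  have hqL : q * L = ∑ i ∈ Finset.range (q.totalDegree + 1), homogeneousComponent i q * L := by
    rw [← Finset.sum_mul, sum_homogeneousComponent]
  rcases m with _ | m'
  · rw [if_pos rfl, hqL, map_sum]
    apply Finset.sum_eq_zero
    intro i _
    rw [homogeneousComponent_of_mem
      ((mem_homogeneousSubmodule _ _).mpr ((homogeneousComponent_isHomogeneous i q).mul hL)),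
      if_neg (by omega)]
  · rw [if_neg (Nat.succ_ne_zero m'), hqL, map_sum]
    have hterm : ∀ i ∈ Finset.range (q.totalDegree + 1),
        homogeneousComponent (m' + 1) (homogeneousComponent i q * L) =
          if i = m' then homogeneousComponent i q * L else 0 := by
      intro i _
      rw [homogeneousComponent_of_mem
        ((mem_homogeneousSubmodule _ _).mpr ((homogeneousComponent_isHomogeneous i q).mul hL))]
      by_cases h : i = m'
      · rw [if_pos (by omega), if_pos h]
      · rw [if_neg (by omega), if_neg h]
    rw [Finset.sum_congr rfl hterm, Finset.sum_ite_eq' (Finset.range (q.totalDegree + 1)) m' _]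
    by_cases hmem : m' ∈ Finset.range (q.totalDegree + 1)
    · rw [if_pos hmem]
      rfl
    · rw [if_neg hmem]
      have h0 : homogeneousComponent m' q = 0 := by
        apply homogeneousComponent_eq_zero
        rw [Finset.mem_range, not_lt] at hmem
        omega
      rw [show m' + 1 - 1 = m' from rfl, h0, zero_mul]

private lemma socleDeg_le_of_separator (v : Fin n → Fin k → K)
    (L : MvPolynomial (Fin k) K) (hL : L.IsHomogeneous 1)
    (hLne : ∀ i, eval (v i) L ≠ 0) (P : Fin n) (B : ℕ)
    (hB : ∃ h : MvPolynomial (Fin k) K, h.IsHomogeneous B ∧ eval (v P) h ≠ 0 ∧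
        ∀ i, i ≠ P → eval (v i) h = 0) :
    socleDeg v Set.univ L ≤ B := by
  classical
  set SS : Set ℕ := {b | ∃ h : MvPolynomial (Fin k) K, h.IsHomogeneous b ∧
      eval (v P) h ≠ 0 ∧ ∀ i, i ≠ P → eval (v i) h = 0} with hSSdef
  have hBmem : B ∈ SS := hB
  have hne : SS.Nonempty := ⟨B, hBmem⟩
  obtain ⟨g, hg, hgP, hgsep⟩ := Nat.sInf_mem hne
  have hle : sInf SS ≤ B := Nat.sInf_le hBmem
  -- g is not in the ideal (I(X), L)
  have hgJ : g ∉ projIdeal v Set.univ ⊔ Ideal.span {L} := by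
    intro hmem
    rw [Submodule.mem_sup] at hmem
    obtain ⟨u, hu, w, hw, huw⟩ := hmem
    rw [Ideal.mem_span_singleton'] at hw
    obtain ⟨q, rfl⟩ := hw
    have hcompg : homogeneousComponent (sInf SS) g = g := by
      rw [homogeneousComponent_of_mem ((mem_homogeneousSubmodule _ _).mpr hg), if_pos rfl]
    have hsum := congrArg (homogeneousComponent (sInf SS)) huw
    rw [map_add, hcompg, comp_mul_lin q L hL] at hsum
    by_cases hB0 : sInf SS = 0
    · rw [if_pos hB0, add_zero] at hsum
      have h0 : eval (v P) (homogeneousComponent (sInf SS) u) = 0 :=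
        eval_zero_of_mem_projIdeal (homogeneousComponent_mem_projIdeal hu _) (Set.mem_univ P)
      rw [hsum] at h0
      exact hgP h0
    · rw [if_neg hB0] at hsum
      set q' : MvPolynomial (Fin k) K := homogeneousComponent (sInf SS - 1) q with hq'
      have hu' : ∀ i : Fin n, eval (v i) (homogeneousComponent (sInf SS) u) = 0 := fun i =>
        eval_zero_of_mem_projIdeal (homogeneousComponent_mem_projIdeal hu _) (Set.mem_univ i)
      have hq'P : eval (v P) q' ≠ 0 := by
        intro h0
        have := congrArg (eval (v P)) hsum
        rw [map_add, map_mul, hu' P, h0, zero_mul, add_zero] at this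
        exact hgP this.symm
      have hq'sep : ∀ i, i ≠ P → eval (v i) q' = 0 := by
        intro i hiP
        have := congrArg (eval (v i)) hsum
        rw [map_add, map_mul, hu' i, hgsep i hiP, zero_add] at this
        exact (mul_eq_zero.mp this).resolve_right (hLne i)
      have hmem' : sInf SS - 1 ∈ SS :=
        ⟨q', homogeneousComponent_isHomogeneous _ _, hq'P, hq'sep⟩
      have := Nat.sInf_le hmem'
      omega
  -- X j * g lies in the ideal for every j
  have hXg : ∀ j : Fin k, MvPolynomial.X j * g ∈ projIdeal v Set.univ ⊔ Ideal.span {L} := by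
    intro j
    set c : K := v P j / eval (v P) L with hc
    have hwmem : (X j * g - C c * (L * g)) ∈ projIdeal v Set.univ := by
      apply Ideal.subset_span
      refine ⟨⟨1 + sInf SS, ?_⟩, ?_⟩
      · exact ((isHomogeneous_X K j).mul hg).sub ((hL.mul hg).C_mul c)
      · intro i _
        rw [map_sub, map_mul, map_mul, map_mul, eval_C, eval_X]
        by_cases hiP : i = P
        · rw [hiP, hc]
          have hLP : eval (v P) L ≠ 0 := hLne P
          field_simp
          ring
        · rw [hgsep i hiP]
          ring
    have hsplit : X j * g = (X j * g - C c * (L * g)) + C c * (L * g) := by ring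
    rw [hsplit]
    exact Ideal.add_mem _ (Ideal.mem_sup_left hwmem)
      (Ideal.mem_sup_right (Ideal.mem_span_singleton'.mpr ⟨C c * g, by ring⟩))
  have hfinal : socleDeg v Set.univ L ≤ sInf SS := Nat.sInf_le ⟨g, hg, hgJ, hXg⟩
  omega

end Aux

/-- Theorem 4.2: for `n ≥ k ≥ 3` points in general linear position and
`1 ≤ a ≤ s(X) - 1`, either `d(X)_a ≤ k - 1` or `d(X)_a ≥ (k-1)(s(X) - 1 - a) + 2`. -/
theorem mindist_socle_dichotomy {K : Type*} [Field K] {n k : ℕ}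
    (hk : 3 ≤ k) (hn : k ≤ n)
    (v : Fin n → Fin k → K) (hv0 : ∀ i, v i ≠ 0)
    (hglp : GeneralLinearPosition K v)
    (L : MvPolynomial (Fin k) K) (hL : L.IsHomogeneous 1)
    (hLne : ∀ i, eval (v i) L ≠ 0)
    (a : ℕ) (ha1 : 1 ≤ a) (ha2 : a ≤ socleDeg v Set.univ L - 1) :
    minDist a v ≤ k - 1 ∨
      (k - 1) * (socleDeg v Set.univ L - 1 - a) + 2 ≤ minDist a v := by
  classical
  by_cases hd : minDist a v ≤ k - 1
  · exact Or.inl hd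
  · right
    push_neg at hd
    have hn0 : 0 < n := by omega
    -- the defining set of minDist is nonempty
    have hMne : { m | ∃ f : MvPolynomial (Fin k) K, f.IsHomogeneous a ∧
        (∃ i, eval (v i) f ≠ 0) ∧ m = Set.ncard {i | eval (v i) f ≠ 0} }.Nonempty := by
      obtain ⟨j, hj⟩ : ∃ j, v ⟨0, hn0⟩ j ≠ 0 := by
        by_contra hcon
        push_neg at hcon
        exact hv0 ⟨0, hn0⟩ (funext hcon)
      exact ⟨_, X j ^ a, isHomogeneous_X_pow j a,
        ⟨⟨0, hn0⟩, by rw [map_pow, eval_X]; exact pow_ne_zero a hj⟩, rfl⟩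
    obtain ⟨f, hfhom, ⟨P, hP⟩, hdval⟩ := Nat.sInf_mem hMne
    have hdval' : minDist a v = Set.ncard {i | eval (v i) f ≠ 0} := hdval
    -- the set of nonvanishing points besides P has cardinality minDist a v - 1
    have hDg : {i | i ≠ P ∧ eval (v i) f ≠ 0} = {i | eval (v i) f ≠ 0} \ {P} := by
      ext i
      simp only [Set.mem_setOf_eq, Set.mem_diff, Set.mem_singleton_iff]
      tauto
    have hDgcard : Set.ncard {i | i ≠ P ∧ eval (v i) f ≠ 0} = minDist a v - 1 := by
      rw [hDg, Set.ncard_diff_singleton_of_mem (show P ∈ {i | eval (v i) f ≠ 0} from hP), hdval']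
    set d := minDist a v with hddef
    set e := k - 1 with hedef
    have he0 : 0 < e := by omega
    set t0 : ℕ := (d - 2) / e + 1 with ht0
    have hkey : d - 1 ≤ t0 * e := by
      have h1 : e * ((d - 2) / e) + (d - 2) % e = d - 2 := Nat.div_add_mod _ _
      have h2 : (d - 2) % e < e := Nat.mod_lt _ he0
      have h3 : t0 * e = e * ((d - 2) / e) + e := by rw [ht0]; ring
      omega
    obtain ⟨h, hhhom, hhP, hhsep⟩ := exists_separator hk v hglp P t0 a f hfhom hP
      (by rw [hDgcard]; exact hkey)
    have hsoc : socleDeg v Set.univ L ≤ a + t0 :=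
      socleDeg_le_of_separator v L hL hLne P (a + t0) ⟨h, hhhom, hhP, hhsep⟩
    -- final arithmetic
    have h4 : socleDeg v Set.univ L - 1 - a ≤ (d - 2) / e := by omega
    have h5 : e * (socleDeg v Set.univ L - 1 - a) ≤ e * ((d - 2) / e) :=
      Nat.mul_le_mul_left _ h4
    have h6 : e * ((d - 2) / e) ≤ d - 2 := Nat.mul_div_le _ _
    have hd2 : 2 ≤ d := by omega
    omega
end

section
/- Let k ≥ 3 and let Y be a set of m ≥ k distinct K-rational points of P^{k-1} in general linear position, and let Q ∈ Y. Then there exist ⌈(m−1)/(k−1)⌉ hyperplanes of P^{k-1}, none of which contains Q, whose union contains Y \ {Q}. -/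
open MvPolynomial

lemma exists_dual_vanishing {K V : Type*} [Field K] [AddCommGroup V] [Module K V]
    (W : Submodule K V) {x : V} (hx : x ∉ W) :
    ∃ φ : V →ₗ[K] K, φ x ≠ 0 ∧ ∀ y ∈ W, φ y = 0 := by
  have hπx : W.mkQ x ≠ 0 := by
    simpa [Submodule.Quotient.mk_eq_zero] using hx
  have h1 : ∃ ψ : Module.Dual K (V ⧸ W), ψ (W.mkQ x) ≠ 0 := by
    by_contra h
    push_neg at h
    exact hπx ((Module.forall_dual_apply_eq_zero_iff K _).mp h)
  obtain ⟨ψ, hψ⟩ := h1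
  refine ⟨ψ.comp W.mkQ, hψ, fun y hy => ?_⟩
  simp [Submodule.mkQ_apply, (Submodule.Quotient.mk_eq_zero W).mpr hy]

/-- Step 3 in the proof of Theorem 4.2: for `m ≥ k ≥ 3` points in
general linear position and a point `Q` among them, the other points lie on a union of
`⌈(m-1)/(k-1)⌉` hyperplanes, none of which contains `Q`. -/
theorem points_minus_one_covered_avoiding_q {K : Type*} [Field K] {k m : ℕ}
    (hk : 3 ≤ k) (hm : k ≤ m)
    (v : Fin m → Fin k → K) (hv0 : ∀ i, v i ≠ 0)
    (hglp : GeneralLinearPosition K v) (q : Fin m) :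
    ∃ Ls : Fin ((m - 1 + k - 2) / (k - 1)) → MvPolynomial (Fin k) K,
      (∀ j, Ls j ≠ 0 ∧ (Ls j).IsHomogeneous 1 ∧ eval (v q) (Ls j) ≠ 0) ∧
      ∀ i, i ≠ q → ∃ j, eval (v i) (Ls j) = 0 := by
  classical
  set d := k - 1 with hd_def
  have hd : 0 < d := by omega
  have hm3 : 3 ≤ m := le_trans hk hm
  set idx : Fin m → ℕ := fun i => if i.val < q.val then i.val else i.val - 1 with hidx_def
  have hidx_le : ∀ i : Fin m, i ≠ q → idx i ≤ m - 2 := by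
    intro i hi
    have hiq : i.val ≠ q.val := fun h => hi (Fin.ext h)
    have h1 := i.isLt; have h2 := q.isLt
    simp only [hidx_def]
    split <;> omega
  have hidx_inj : ∀ i₁ i₂ : Fin m, i₁ ≠ q → i₂ ≠ q → idx i₁ = idx i₂ → i₁ = i₂ := by
    intro i₁ i₂ h1 h2 h
    have hq1 : i₁.val ≠ q.val := fun h => h1 (Fin.ext h)
    have hq2 : i₂.val ≠ q.val := fun h => h2 (Fin.ext h)
    apply Fin.ext
    simp only [hidx_def] at h
    split at h <;> split at h <;> omega
  set t := (m - 1 + k - 2) / d with ht_def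
  have ht : t = (m - 2) / d + 1 := by
    have h : m - 1 + k - 2 = (m - 2) + d := by omega
    rw [ht_def, h, Nat.add_div_right _ hd]
  set T : Fin t → Finset (Fin m) :=
    fun j => Finset.univ.filter (fun i => i ≠ q ∧ idx i / d = j.val) with hT_def
  have hTmem : ∀ (j : Fin t) (i : Fin m), i ∈ T j ↔ i ≠ q ∧ idx i / d = j.val := by
    intro j i; simp [hT_def]
  have hTcard : ∀ j, (T j).card ≤ d := by
    intro j
    have h := Finset.card_le_card_of_injOn idx
      (s := T j) (t := Finset.Ico (j.val * d) (j.val * d + d)) ?_ ?_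
    · rwa [Nat.card_Ico, Nat.add_sub_cancel_left] at h
    · intro i hi
      rw [Finset.mem_coe, hTmem] at hi
      obtain ⟨-, h2⟩ := hi
      have h3 := Nat.div_add_mod' (idx i) d
      have h4 := Nat.mod_lt (idx i) hd
      simp only [Finset.mem_coe, Finset.mem_Ico]
      rw [← h2]
      omega
    · intro i₁ h₁ i₂ h₂ hh
      rw [Finset.mem_coe, hTmem] at h₁ h₂
      exact hidx_inj _ _ h₁.1 h₂.1 hh
  have key : ∀ j : Fin t, ∃ φ : (Fin k → K) →ₗ[K] K, φ (v q) ≠ 0 ∧ ∀ i ∈ T j, φ (v i) = 0 := by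
    intro j
    have hcard : (insert q (T j)).card ≤ k := by
      have h1 := Finset.card_insert_le q (T j)
      have h2 := hTcard j
      omega
    have li := hglp (insert q (T j)) hcard
    have hqmem : q ∈ insert q (T j) := Finset.mem_insert_self _ _
    have hxs : (⟨q, hqmem⟩ : {x // x ∈ insert q (T j)}) ∉
        {y : {x // x ∈ insert q (T j)} | (y : Fin m) ∈ T j} := by
      simp only [Set.mem_setOf_eq, hTmem]
      tauto
    have hspan := li.notMem_span_image hxs
    have himg : (fun i : {x // x ∈ insert q (T j)} => v i) ''
        {y : {x // x ∈ insert q (T j)} | (y : Fin m) ∈ T j} = v '' (T j : Set (Fin m)) := by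
      ext w
      constructor
      · rintro ⟨y, hy, rfl⟩; exact ⟨y, hy, rfl⟩
      · rintro ⟨i, hi, rfl⟩
        exact ⟨⟨i, Finset.mem_insert_of_mem hi⟩, hi, rfl⟩
    rw [himg] at hspan
    obtain ⟨φ, hφq, hφ0⟩ :=
      exists_dual_vanishing (Submodule.span K (v '' (T j : Set (Fin m)))) hspan
    exact ⟨φ, hφq, fun i hi => hφ0 _ (Submodule.subset_span ⟨i, hi, rfl⟩)⟩
  choose φ hφq hφ0 using key
  set Ls : Fin t → MvPolynomial (Fin k) K :=
    fun j => ∑ j' : Fin k, C (φ j (fun l => if j' = l then 1 else 0)) * X j' with hLs_def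
  have heval : ∀ (j : Fin t) (w : Fin k → K), eval w (Ls j) = φ j w := by
    intro j w
    have h1 : eval w (Ls j) = ∑ j' : Fin k, φ j (fun l => if j' = l then 1 else 0) * w j' := by
      simp [hLs_def]
    have h2 : φ j w = ∑ j' : Fin k, w j' * φ j (fun l => if j' = l then (1 : K) else 0) := by
      conv_lhs => rw [pi_eq_sum_univ w]
      rw [map_sum]
      simp [smul_eq_mul]
    rw [h1, h2]
    exact Finset.sum_congr rfl fun j' _ => mul_comm _ _
  refine ⟨Ls, fun j => ⟨?_, ?_, ?_⟩, ?_⟩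
  · intro h
    apply hφq j
    rw [← heval j (v q), h, map_zero]
  · apply MvPolynomial.IsHomogeneous.sum
    intro j' _
    simpa using (MvPolynomial.isHomogeneous_C (Fin k) _).mul (MvPolynomial.isHomogeneous_X K j')
  · rw [heval]
    exact hφq j
  · intro i hi
    have hjv : idx i / d < t := by
      have h1 : idx i / d ≤ (m - 2) / d := Nat.div_le_div_right (hidx_le i hi)
      omega
    refine ⟨⟨idx i / d, hjv⟩, ?_⟩
    rw [heval]
    apply hφ0
    rw [hTmem]
    exact ⟨hi, rfl⟩
end

section
/- Let X be a set of n distinct K-rational points of P^{k-1} with k ≥ 3, not all contained in a hyperplane, and let a be an integer with 1 ≤ a ≤ α(X) − 1. Suppose d(X)_a = C(α(X) − 1 − a + k − 1, k − 1), i.e., the lower bound of Theorem 3.4 is attained. Let X' ⊊ X be a subset with |X'| = n − d(X)_a for which there exists a homogeneous polynomial f of degree a vanishing at every point of X' and at no point of Y := X \ X'. Then Y is in generic position and α(Y) = α(X) − a. -/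
open MvPolynomial

section AuxLemmas

variable {K : Type*} [Field K]

lemma aeval_eq_eval'' {σ : Type*} (x : σ → K) (f : MvPolynomial σ K) :
    aeval x f = eval x f := DFunLike.congr_fun (coe_aeval_eq_eval x) f

/-- Multisets of size `i` correspond to exponent vectors of degree `i`. -/
noncomputable def symEquivDeg (k i : ℕ) :
    Sym (Fin k) i ≃ {d : Fin k →₀ ℕ | Finsupp.degree d = i} :=
  Equiv.subtypeEquiv Multiset.toFinsupp.toEquiv (fun s => by
    constructor
    · rintro rfl
      simpa [Finsupp.degree_apply, Finsupp.sum] using Multiset.toFinsupp_sum_eq s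
    · intro h
      rw [← Multiset.toFinsupp_sum_eq s]
      simpa [Finsupp.degree_apply, Finsupp.sum] using h)

instance degFinite (k i : ℕ) : Finite {d : Fin k →₀ ℕ | Finsupp.degree d = i} :=
  Finite.of_equiv _ (symEquivDeg k i)

lemma card_deg (k i : ℕ) (hk : 1 ≤ k) :
    Nat.card {d : Fin k →₀ ℕ | Finsupp.degree d = i} = (i + k - 1).choose (k - 1) := by
  rw [← Nat.card_congr (symEquivDeg k i), Nat.card_eq_fintype_card,
    Sym.card_sym_fin_eq_multichoose, Nat.multichoose_eq]
  have h1 : i + k - 1 - i = k - 1 := by omega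
  have h2 : k + i - 1 = i + k - 1 := by omega
  rw [h2, ← h1, Nat.choose_symm (by omega)]

/-- The homogeneous component of degree `i` is isomorphic to a finite `Finsupp`. -/
noncomputable def homogEquiv (K : Type*) [Field K] (k i : ℕ) :
    (homogeneousSubmodule (Fin k) K i) ≃ₗ[K]
      ({d : Fin k →₀ ℕ | Finsupp.degree d = i} →₀ K) :=
  (LinearEquiv.ofEq _ _ (homogeneousSubmodule_eq_finsupp_supported (Fin k) K i)).trans
    (AddMonoidAlgebra.supportedEquivFinsupp _)

instance homogFD (k i : ℕ) : FiniteDimensional K (homogeneousSubmodule (Fin k) K i) := by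
  haveI := Fintype.ofFinite {d : Fin k →₀ ℕ | Finsupp.degree d = i}
  exact Module.Finite.equiv (homogEquiv K k i).symm

lemma finrank_homog (k i : ℕ) (hk : 1 ≤ k) :
    Module.finrank K (homogeneousSubmodule (Fin k) K i) = (i + k - 1).choose (k - 1) := by
  haveI := Fintype.ofFinite {d : Fin k →₀ ℕ | Finsupp.degree d = i}
  rw [((homogEquiv K k i).trans
      (Finsupp.linearEquivFunOnFinite K K _)).finrank_eq,
    Module.finrank_fintype_fun_eq_card, ← Nat.card_eq_fintype_card, card_deg k i hk]

variable {n k : ℕ}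

/-- Evaluation of homogeneous polynomials of degree `i` at the points indexed by `W`. -/
noncomputable def evalMapOn (v : Fin n → Fin k → K) (W : Set (Fin n)) (i : ℕ) :
    homogeneousSubmodule (Fin k) K i →ₗ[K] (↥W → K) :=
  (LinearMap.pi fun p : ↥W =>
    ((aeval (v (p : Fin n)) : MvPolynomial (Fin k) K →ₐ[K] K)).toLinearMap).comp
    (Submodule.subtype _)

lemma evalMapOn_apply (v : Fin n → Fin k → K) (W : Set (Fin n)) (i : ℕ)
    (x : homogeneousSubmodule (Fin k) K i) (p : ↥W) :
    evalMapOn v W i x p = eval (v (p : Fin n)) (x : MvPolynomial (Fin k) K) :=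
  aeval_eq_eval'' _ _

lemma mem_ker_evalMapOn {v : Fin n → Fin k → K} {W : Set (Fin n)} {i : ℕ}
    (x : homogeneousSubmodule (Fin k) K i) :
    x ∈ LinearMap.ker (evalMapOn v W i) ↔
      ∀ p ∈ W, eval (v p) (x : MvPolynomial (Fin k) K) = 0 := by
  constructor
  · intro h p hp
    have h2 := congrFun (LinearMap.mem_ker.mp h) ⟨p, hp⟩
    rw [evalMapOn_apply] at h2
    exact h2
  · intro h
    rw [LinearMap.mem_ker]
    funext p
    rw [evalMapOn_apply]
    exact h p p.2

lemma map_ker_evalMapOn (v : Fin n → Fin k → K) (W : Set (Fin n)) (i : ℕ) :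
    Submodule.map (homogeneousSubmodule (Fin k) K i).subtype
      (LinearMap.ker (evalMapOn v W i)) = homVan i v W := by
  have h : LinearMap.ker (evalMapOn v W i) =
      Submodule.comap (homogeneousSubmodule (Fin k) K i).subtype
        (⨅ p ∈ W, LinearMap.ker
          ((aeval (v p) : MvPolynomial (Fin k) K →ₐ[K] K).toLinearMap)) := by
    ext x
    rw [mem_ker_evalMapOn, Submodule.mem_comap]
    simp only [Submodule.mem_iInf, LinearMap.mem_ker, AlgHom.toLinearMap_apply,
      Submodule.coe_subtype]
    constructor
    · intro h p hp; rw [aeval_eq_eval'']; exact h p hp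
    · intro h p hp; have h2 := h p hp; rwa [aeval_eq_eval''] at h2
  rw [h, Submodule.map_comap_subtype]
  rfl

lemma HFpts_eq_finrank_range (v : Fin n → Fin k → K) (W : Set (Fin n)) (i : ℕ) :
    HFpts v W i = Module.finrank K (LinearMap.range (evalMapOn v W i)) := by
  have h1 : Module.finrank K (homVan i v W) =
      Module.finrank K (LinearMap.ker (evalMapOn v W i)) := by
    rw [← map_ker_evalMapOn v W i, Submodule.finrank_map_subtype_eq]
  have h2 := LinearMap.finrank_range_add_finrank_ker (evalMapOn v W i)
  unfold HFpts
  omega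

end AuxLemmas

/-- Section 5: if the bound of Theorem 3.4 is attained, then the
complement `Y = X \ X'` is in generic position and `α(Y) = α(X) - a`. -/
theorem attained_bound_implies_generic_position {K : Type*} [Field K] {n k : ℕ}
    (hk : 3 ≤ k)
    (v : Fin n → Fin k → K) (hv0 : ∀ i, v i ≠ 0) (hdist : ProjectivelyDistinct v)
    (hspan : Submodule.span K (Set.range v) = ⊤)
    (a : ℕ) (ha1 : 1 ≤ a) (ha2 : a ≤ initDegOn v Set.univ - 1)
    (hmin : minDist a v = Nat.choose (initDegOn v Set.univ - 1 - a + (k - 1)) (k - 1))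
    (S : Set (Fin n)) (hS : S ≠ Set.univ) (hcard : S.ncard = n - minDist a v)
    (f : MvPolynomial (Fin k) K) (hf : f.IsHomogeneous a)
    (hvan : ∀ i ∈ S, eval (v i) f = 0) (hnz : ∀ i ∉ S, eval (v i) f ≠ 0) :
    (∀ i : ℕ, HFpts v Sᶜ i = min (Sᶜ.ncard) (Nat.choose (i + k - 1) (k - 1))) ∧
      initDegOn v Sᶜ + a = initDegOn v Set.univ := by
  classical
  set α := initDegOn v Set.univ with hα
  obtain ⟨i₀, hi₀⟩ : ∃ i, i ∉ S := by
    by_contra h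
    push_neg at h
    exact hS (Set.eq_univ_iff_forall.mpr h)
  have hf0 : f ≠ 0 := fun h => hnz i₀ hi₀ (by simp [h])
  have haα : a + 1 ≤ α := by omega
  have hk1 : 1 ≤ k := by omega
  -- lower bound for degrees of polynomials vanishing on the complement
  have hlow : ∀ d (g : MvPolynomial (Fin k) K), g ≠ 0 → g.IsHomogeneous d →
      (∀ i ∈ Sᶜ, eval (v i) g = 0) → α ≤ d + a := by
    intro d g hg0 hgh hgv
    apply Nat.sInf_le
    refine ⟨g * f, mul_ne_zero hg0 hf0, hgh.mul hf, ?_⟩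
    intro i _
    rw [map_mul]
    by_cases hi : i ∈ S
    · rw [hvan i hi, mul_zero]
    · rw [hgv i hi, zero_mul]
  -- the cardinality of the complement
  have hset : {i | eval (v i) f ≠ 0} = Sᶜ := by
    ext i
    simp only [Set.mem_setOf_eq, Set.mem_compl_iff]
    exact ⟨fun h hi => h (hvan i hi), hnz i⟩
  have hmle : minDist a v ≤ Sᶜ.ncard :=
    Nat.sInf_le ⟨f, hf, ⟨i₀, hnz i₀ hi₀⟩, by rw [hset]⟩
  have hScard : S.ncard + Sᶜ.ncard = n := by
    have h := Set.ncard_add_ncard_compl S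
    simpa using h
  have hWm : Sᶜ.ncard = minDist a v := by omega
  have hWcard : Sᶜ.ncard = (α - 1 - a + (k - 1)).choose (k - 1) := by rw [hWm, hmin]
  have hrk : ∀ i, Module.finrank K (homogeneousSubmodule (Fin k) K i)
      = (i + k - 1).choose (k - 1) := fun i => finrank_homog k i hk1
  haveI : Fintype ↥(Sᶜ) := Fintype.ofFinite _
  have hfr : Module.finrank K (↥(Sᶜ) → K) = Sᶜ.ncard := by
    rw [Module.finrank_fintype_fun_eq_card, ← Nat.card_eq_fintype_card,
      Nat.card_coe_set_eq]
  -- injectivity in low degrees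
  have hker : ∀ i, i + a < α → LinearMap.ker (evalMapOn v Sᶜ i) = ⊥ := by
    intro i hi
    rw [eq_bot_iff]
    intro x hx
    rw [Submodule.mem_bot]
    by_contra hx0
    have hxne : (x : MvPolynomial (Fin k) K) ≠ 0 := fun h => hx0 (Subtype.ext h)
    have h2 := hlow i x.val hxne x.2 ((mem_ker_evalMapOn x).mp hx)
    omega
  have hαsub : α - 1 - a + (k - 1) = α - a - 1 + k - 1 := by omega
  have hWfr : Sᶜ.ncard = Module.finrank K (homogeneousSubmodule (Fin k) K (α - a - 1)) := by
    rw [hrk, hWcard, hαsub]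
  -- surjectivity in degree α - a - 1
  have hsurj1 : LinearMap.range (evalMapOn v Sᶜ (α - a - 1)) = ⊤ := by
    rw [← LinearMap.ker_eq_bot_iff_range_eq_top_of_finrank_eq_finrank
      (by rw [hfr]; exact hWfr.symm)]
    exact hker _ (by omega)
  -- surjectivity in all degrees ≥ α - a - 1
  have hsurj : ∀ i, α - a - 1 ≤ i → LinearMap.range (evalMapOn v Sᶜ i) = ⊤ := by
    intro i hi
    rw [← top_le_iff, ← (Pi.basisFun K ↥(Sᶜ)).span_eq, Submodule.span_le]
    rintro y ⟨p, rfl⟩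
    rw [Pi.basisFun_apply]
    have hmem : (Pi.single p 1 : ↥(Sᶜ) → K) ∈ LinearMap.range (evalMapOn v Sᶜ (α - a - 1)) := by
      rw [hsurj1]; trivial
    obtain ⟨x, hxev⟩ := hmem
    obtain ⟨j, hj⟩ : ∃ j, v (p : Fin n) j ≠ 0 := by
      by_contra h
      push_neg at h
      exact hv0 p (funext h)
    have hc0 : (v (p : Fin n) j) ^ (i - (α - a - 1)) ≠ 0 := pow_ne_zero _ hj
    have h1 : ((X j : MvPolynomial (Fin k) K) ^ (i - (α - a - 1))).IsHomogeneous
        (i - (α - a - 1)) := isHomogeneous_X_pow j (i - (α - a - 1))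
    have h2 : ((X j : MvPolynomial (Fin k) K) ^ (i - (α - a - 1)) * x.val).IsHomogeneous i := by
      have h3 := h1.mul x.2
      rwa [show i - (α - a - 1) + (α - a - 1) = i from by omega] at h3
    refine ⟨((v (p : Fin n) j) ^ (i - (α - a - 1)))⁻¹ • ⟨_, h2⟩, funext fun q => ?_⟩
    have hevq : eval (v (q : Fin n)) (x : MvPolynomial (Fin k) K) = (Pi.single p 1 : ↥(Sᶜ) → K) q := by
      rw [← evalMapOn_apply, hxev]
    rw [map_smul]
    show ((v (p : Fin n) j) ^ (i - (α - a - 1)))⁻¹ •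
        (evalMapOn v Sᶜ i ⟨_, h2⟩ q) = (Pi.single p 1 : ↥(Sᶜ) → K) q
    rw [evalMapOn_apply]
    show ((v (p : Fin n) j) ^ (i - (α - a - 1)))⁻¹ •
        (eval (v (q : Fin n)) ((X j : MvPolynomial (Fin k) K) ^ (i - (α - a - 1)) * x.val))
        = (Pi.single p 1 : ↥(Sᶜ) → K) q
    rw [map_mul, map_pow, eval_X, hevq]
    by_cases hq : q = p
    · subst hq
      rw [Pi.single_eq_same, mul_one, smul_eq_mul, inv_mul_cancel₀ hc0]
    · rw [Pi.single_eq_of_ne hq, mul_zero, smul_zero]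
  -- the Hilbert function
  have hHF : ∀ i : ℕ, HFpts v Sᶜ i = min (Sᶜ.ncard) (Nat.choose (i + k - 1) (k - 1)) := by
    intro i
    rcases le_or_gt (α - a - 1) i with hi | hi
    · have hle : Sᶜ.ncard ≤ (i + k - 1).choose (k - 1) := by
        rw [hWcard, hαsub]
        exact Nat.choose_le_choose _ (by omega)
      rw [HFpts_eq_finrank_range, hsurj i hi, finrank_top, hfr, min_eq_left hle]
    · have hge : (i + k - 1).choose (k - 1) ≤ Sᶜ.ncard := by
        rw [hWcard, hαsub]
        exact Nat.choose_le_choose _ (by omega)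
      have hrange : Module.finrank K (LinearMap.range (evalMapOn v Sᶜ i)) =
          Module.finrank K (homogeneousSubmodule (Fin k) K i) :=
        LinearMap.finrank_range_of_inj (LinearMap.ker_eq_bot.mp (hker i (by omega)))
      rw [HFpts_eq_finrank_range, hrange, hrk, min_eq_right hge]
  -- the initial degree of the complement
  have hkerne : LinearMap.ker (evalMapOn v Sᶜ (α - a)) ≠ ⊥ := by
    intro hbot
    have hinj := LinearMap.ker_eq_bot.mp hbot
    have hle := LinearMap.finrank_le_finrank_of_injective hinj
    rw [hrk, hfr, hWcard] at hle
    have hstrict : (α - 1 - a + (k - 1)).choose (k - 1) < (α - a + k - 1).choose (k - 1) := by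
      have e1 : α - a + k - 1 = (α - a + k - 2) + 1 := by omega
      have e2 : k - 1 = (k - 2) + 1 := by omega
      have e3 : α - 1 - a + (k - 1) = α - a + k - 2 := by omega
      have hpos : 0 < (α - a + k - 2).choose (k - 2) := Nat.choose_pos (by omega)
      have h4 := Nat.choose_succ_succ' (α - a + k - 2) (k - 2)
      rw [e3, e1, e2, h4]
      omega
    exact absurd hle (not_le.mpr hstrict)
  obtain ⟨x, hxker, hx0⟩ := Submodule.exists_mem_ne_zero_of_ne_bot hkerne
  have hxv : ∀ i ∈ Sᶜ, eval (v i) (x : MvPolynomial (Fin k) K) = 0 :=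
    (mem_ker_evalMapOn x).mp hxker
  have hxne : (x : MvPolynomial (Fin k) K) ≠ 0 := fun h => hx0 (Subtype.ext h)
  have hwit : (α - a) ∈ {d | ∃ g : MvPolynomial (Fin k) K, g ≠ 0 ∧ g.IsHomogeneous d ∧
      ∀ i ∈ Sᶜ, eval (v i) g = 0} := ⟨x.val, hxne, x.2, hxv⟩
  have hle1 : initDegOn v Sᶜ ≤ α - a := Nat.sInf_le hwit
  have hge1 : α - a ≤ initDegOn v Sᶜ := by
    apply le_csInf ⟨_, hwit⟩
    rintro d ⟨g, hg0, hgh, hgv⟩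
    have h := hlow d g hg0 hgh hgv
    omega
  have hid : initDegOn v Sᶜ = α - a := le_antisymm hle1 hge1
  exact ⟨hHF, by omega⟩
end

section
/- Let k ≥ 3 and m ≥ 3 be integers. Let Y be a nonempty finite set of distinct K-rational points of P^{k-1} such that α(Y) = m − 1 and I(Y) is generated by homogeneous polynomials f_1,…,f_μ, all of degree m − 1. Let L ∈ R_1 be a linear form with L(v_P) ≠ 0 for every P ∈ Y, and let P_1,…,P_ℓ be distinct K-rational points of P^{k-1} with representative vectors w_1,…,w_ℓ satisfying L(w_i) = 0 for all i. If the ℓ × μ matrix (f_j(w_i))_{i,j} has rank μ, then the set X = Y ∪ {P_1,…,P_ℓ} satisfies α(X) = m. -/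
open MvPolynomial

-- aux lemma 1: homogeneous component of g * s where s is homogeneous of degree d
lemma homogComp_mul_homog {σ K : Type*} [Field K] {d : ℕ}
    {s : MvPolynomial σ K} (hs : s.IsHomogeneous d) (g : MvPolynomial σ K) :
    homogeneousComponent d (g * s) = (g.coeff 0) • s := by
  conv_lhs => rw [← sum_homogeneousComponent g, Finset.sum_mul, map_sum]
  rw [Finset.sum_eq_single 0]
  · have h0 : (homogeneousComponent 0 g * s) ∈ homogeneousSubmodule σ K d := by
      rw [mem_homogeneousSubmodule]
      simpa using (homogeneousComponent_isHomogeneous 0 g).mul hs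
    rw [homogeneousComponent_of_mem h0, if_pos rfl, homogeneousComponent_zero,
      smul_eq_C_mul]
  · intro i _ hi
    have h0 : (homogeneousComponent i g * s) ∈ homogeneousSubmodule σ K (i + d) := by
      rw [mem_homogeneousSubmodule]
      exact (homogeneousComponent_isHomogeneous i g).mul hs
    rw [homogeneousComponent_of_mem h0, if_neg (by omega)]
  · intro h
    simp at h

-- aux lemma 2: a degree-d homogeneous element of an ideal spanned by degree-d
-- homogeneous polys is a K-linear combination of the generators
lemma homog_mem_span {σ K : Type*} [Field K] {d μ : ℕ}
    (f : Fin μ → MvPolynomial σ K) (hf : ∀ j, (f j).IsHomogeneous d)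
    {h : MvPolynomial σ K} (hh : h.IsHomogeneous d)
    (hmem : h ∈ Ideal.span (Set.range f)) :
    ∃ c : Fin μ → K, h = ∑ j, c j • f j := by
  rw [Ideal.span, Submodule.mem_span_range_iff_exists_fun] at hmem
  obtain ⟨g, hg⟩ := hmem
  refine ⟨fun j => (g j).coeff 0, ?_⟩
  have h1 : homogeneousComponent d h = h :=
    (homogeneousComponent_of_mem ((mem_homogeneousSubmodule d h).2 hh)).trans (if_pos rfl)
  calc h = homogeneousComponent d (∑ j, g j • f j) := by rw [hg, h1]
    _ = ∑ j, ((g j).coeff 0) • f j := by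
        rw [map_sum]
        exact Finset.sum_congr rfl fun j _ => by
          rw [smul_eq_mul, homogComp_mul_homog (hf j)]

-- aux lemma 3: rank μ matrix has trivial kernel
lemma vec_eq_zero_of_rank {ℓ μ : ℕ} {K : Type*} [Field K]
    (M : Matrix (Fin ℓ) (Fin μ) K) (hrank : M.rank = μ)
    (c : Fin μ → K) (hc : M.mulVec c = 0) : c = 0 := by
  have h1 := LinearMap.finrank_range_add_finrank_ker M.mulVecLin
  rw [Module.finrank_fintype_fun_eq_card, Fintype.card_fin] at h1
  rw [Matrix.rank] at hrank
  have h2 : Module.finrank K (LinearMap.ker M.mulVecLin) = 0 := by omega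
  have h3 : LinearMap.ker M.mulVecLin = ⊥ := Submodule.finrank_eq_zero.mp h2
  have : c ∈ LinearMap.ker M.mulVecLin := by
    rw [LinearMap.mem_ker, Matrix.mulVecLin_apply, hc]
  rw [h3, Submodule.mem_bot] at this
  exact this

/-- Remark 5.1: adding to `Y` sufficiently generic points on the
hyperplane `V(L)` raises the initial degree from `m - 1` to `m`. -/
theorem initDeg_of_union_with_hyperplane_points {K : Type*} [Field K]
    {k m n ℓ μ : ℕ} (hk : 3 ≤ k) (hm : 3 ≤ m) (hn : 0 < n)
    (v : Fin n → Fin k → K) (hv0 : ∀ i, v i ≠ 0) (hdist : ProjectivelyDistinct v)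
    (hα : initDegOn v Set.univ = m - 1)
    (f : Fin μ → MvPolynomial (Fin k) K) (hf : ∀ j, (f j).IsHomogeneous (m - 1))
    (hgen : projIdeal v Set.univ = Ideal.span (Set.range f))
    (L : MvPolynomial (Fin k) K) (hL : L.IsHomogeneous 1)
    (hLv : ∀ i, eval (v i) L ≠ 0)
    (w : Fin ℓ → Fin k → K) (hw0 : ∀ i, w i ≠ 0) (hwdist : ProjectivelyDistinct w)
    (hwL : ∀ i, eval (w i) L = 0)
    (hrank : (Matrix.of fun (i : Fin ℓ) (j : Fin μ) => eval (w i) (f j)).rank = μ) :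
    initDegOn (Fin.append v w) Set.univ = m := by
  set Tv : Set ℕ := { d | ∃ g : MvPolynomial (Fin k) K, g ≠ 0 ∧ g.IsHomogeneous d ∧
      ∀ i ∈ (Set.univ : Set (Fin n)), eval (v i) g = 0 } with hTv
  set T : Set ℕ := { d | ∃ g : MvPolynomial (Fin k) K, g ≠ 0 ∧ g.IsHomogeneous d ∧
      ∀ i ∈ (Set.univ : Set (Fin (n + ℓ))), eval (Fin.append v w i) g = 0 } with hT
  have hTdef : initDegOn (Fin.append v w) Set.univ = sInf T := rfl
  have hTvdef : initDegOn v Set.univ = sInf Tv := rfl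
  -- Y has a nonzero degree-(m-1) form
  have hTvne : Tv.Nonempty := by
    by_contra hne
    rw [Set.not_nonempty_iff_eq_empty] at hne
    rw [hTvdef, hne, Nat.sInf_empty] at hα
    omega
  have hmem_v : (m - 1) ∈ Tv := by
    rw [← hα, hTvdef]; exact Nat.sInf_mem hTvne
  obtain ⟨g, hg0, hghom, hgvan⟩ := hmem_v
  -- L ≠ 0
  have hL0 : L ≠ 0 := by
    intro h
    exact hLv ⟨0, hn⟩ (by rw [h, map_zero])
  -- m ∈ T via L * g
  have hmT : m ∈ T := by
    refine ⟨L * g, mul_ne_zero hL0 hg0, ?_, ?_⟩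
    · have := hL.mul hghom
      have h1 : 1 + (m - 1) = m := by omega
      rwa [h1] at this
    · intro i _
      refine Fin.addCases (motive := fun i => eval (Fin.append v w i) (L * g) = 0)
        (fun j => ?_) (fun j => ?_) i
      · simp only [Fin.append_left, map_mul, hgvan j (Set.mem_univ j), mul_zero]
      · simp only [Fin.append_right, map_mul, hwL j, zero_mul]
  -- lower bound: every d ∈ T satisfies m ≤ d
  have hlow : ∀ d ∈ T, m ≤ d := by
    intro d hd
    obtain ⟨h, hh0, hhhom, hhvan⟩ := hd
    have hvanv : ∀ i ∈ (Set.univ : Set (Fin n)), eval (v i) h = 0 := by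
      intro i _
      have := hhvan (Fin.castAdd ℓ i) (Set.mem_univ _)
      rwa [Fin.append_left] at this
    have hvanw : ∀ i : Fin ℓ, eval (w i) h = 0 := by
      intro i
      have := hhvan (Fin.natAdd n i) (Set.mem_univ _)
      rwa [Fin.append_right] at this
    have hdTv : d ∈ Tv := ⟨h, hh0, hhhom, hvanv⟩
    have hdge : m - 1 ≤ d := by
      rw [← hα, hTvdef]; exact Nat.sInf_le hdTv
    by_contra hdm
    push_neg at hdm
    have hdeq : d = m - 1 := by omega
    subst hdeq
    -- h ∈ projIdeal v univ
    have hmemI : h ∈ projIdeal v Set.univ :=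
      Ideal.subset_span ⟨⟨m - 1, hhhom⟩, hvanv⟩
    rw [hgen] at hmemI
    obtain ⟨c, hc⟩ := homog_mem_span f hf hhhom hmemI
    have hcz : c = 0 := by
      apply vec_eq_zero_of_rank _ hrank
      funext i
      have := hvanw i
      rw [hc, map_sum] at this
      simpa [Matrix.mulVec, dotProduct, smul_eq_C_mul, mul_comm] using this
    rw [hcz] at hc
    simp at hc
    exact hh0 hc
  rw [hTdef]
  exact le_antisymm (Nat.sInf_le hmT) (hlow _ (Nat.sInf_mem ⟨m, hmT⟩))
end
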